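/- Let A₀, A₁, A₂ ∈ ℂ^{n×n} and r > 0 satisfy r‖A₁‖ + r²‖A₂‖ < σ_min(A₀), where σ_min denotes the smallest singular value and ‖·‖ the operator norm. Then for all z₁, z₂ in the open disc D = {z : |z| < r} and all x ≠ 0, (z₁²A₂ + z₂A₁ + A₀)x ≠ 0; consequently P(λ) = λ²A₂ + λA₁ + A₀ is hyperstable with respect to D. -/

import Mathlib

/-- `P` is hyperstable with respect to `D`. -/
def Hyperstable {n : ℕ} (P : ℂ → Matrix (Fin n) (Fin n) ℂ) (D : Set ℂ) : Prop :=
  ∀ x : Fin n → ℂ, x ≠ 0 → ∃ y : Fin n → ℂ, y ≠ 0 ∧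
    ∀ μ ∈ D, dotProduct (star y) ((P μ).mulVec x) ≠ 0

/-- The ℓ²→ℓ² operator norm of a complex matrix. -/
noncomputable def opNorm {n : ℕ} (A : Matrix (Fin n) (Fin n) ℂ) : ℝ :=
  ‖(Matrix.toEuclideanCLM (𝕜 := ℂ) A : EuclideanSpace ℂ (Fin n) →L[ℂ] EuclideanSpace ℂ (Fin n))‖

/-- The smallest singular value of a complex matrix. -/
noncomputable def sigmaMin {n : ℕ} (A : Matrix (Fin n) (Fin n) ℂ) : ℝ :=
  ⨅ x : Metric.sphere (0 : EuclideanSpace ℂ (Fin n)) 1,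
    ‖Matrix.toEuclideanCLM (𝕜 := ℂ) A (x : EuclideanSpace ℂ (Fin n))‖

lemma sigmaMin_mul_norm_le {n : ℕ} (A : Matrix (Fin n) (Fin n) ℂ)
    (x : EuclideanSpace ℂ (Fin n)) :
    sigmaMin A * ‖x‖ ≤ ‖Matrix.toEuclideanCLM (𝕜 := ℂ) A x‖ := by
  rcases eq_or_ne x 0 with rfl | hx
  · simp
  · have hxn : (0:ℝ) < ‖x‖ := norm_pos_iff.2 hx
    have hu : ((‖x‖:ℂ)⁻¹ • x) ∈ Metric.sphere (0 : EuclideanSpace ℂ (Fin n)) 1 := by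
      simp [norm_smul, abs_of_pos (inv_pos.2 hxn), inv_mul_cancel₀ hxn.ne']
    have h1 : sigmaMin A ≤ ‖Matrix.toEuclideanCLM (𝕜 := ℂ) A ((((‖x‖:ℂ)⁻¹ • x) : EuclideanSpace ℂ (Fin n)))‖ := by
      exact ciInf_le ⟨0, by rintro z ⟨w, rfl⟩; exact norm_nonneg _⟩ (⟨_, hu⟩ : Metric.sphere (0 : EuclideanSpace ℂ (Fin n)) 1)
    rw [map_smul, norm_smul] at h1
    simp only [norm_inv, Complex.norm_real, norm_norm] at h1
    calc sigmaMin A * ‖x‖ ≤ (‖x‖⁻¹ * ‖Matrix.toEuclideanCLM (𝕜 := ℂ) A x‖) * ‖x‖ := by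
            exact mul_le_mul_of_nonneg_right h1 hxn.le
      _ = ‖Matrix.toEuclideanCLM (𝕜 := ℂ) A x‖ := by field_simp


set_option maxHeartbeats 1000000 in
lemma key {n : ℕ} (A₀ A₁ A₂ : Matrix (Fin n) (Fin n) ℂ) (r : ℝ) (hr : 0 < r)
    (h : r * opNorm A₁ + r ^ 2 * opNorm A₂ < sigmaMin A₀)
    (x : Fin n → ℂ) (hx : x ≠ 0) :
    A₀.mulVec x ≠ 0 ∧ ∀ z₁ z₂ : ℂ, ‖z₁‖ < r → ‖z₂‖ < r →
      dotProduct (star (A₀.mulVec x)) ((z₁ ^ 2 • A₂ + z₂ • A₁ + A₀).mulVec x) ≠ 0 := by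
  classical
  set X : EuclideanSpace ℂ (Fin n) := (WithLp.equiv 2 _).symm x with hX
  have hX0 : X ≠ 0 := fun hh => hx (by simpa [hX] using congrArg (WithLp.equiv 2 _) hh)
  set Y : EuclideanSpace ℂ (Fin n) := Matrix.toEuclideanCLM (𝕜 := ℂ) A₀ X with hY
  have hop1 : (0:ℝ) ≤ opNorm A₁ := norm_nonneg _
  have hop2 : (0:ℝ) ≤ opNorm A₂ := norm_nonneg _
  have hs : (0:ℝ) < ‖X‖ := norm_pos_iff.2 hX0
  have hσX : sigmaMin A₀ * ‖X‖ ≤ ‖Y‖ := sigmaMin_mul_norm_le A₀ X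
  have hc0 : (0:ℝ) ≤ r * opNorm A₁ + r ^ 2 * opNorm A₂ :=
    add_nonneg (mul_nonneg hr.le hop1) (mul_nonneg (by positivity) hop2)
  have ht : (0:ℝ) < ‖Y‖ := by nlinarith
  have hY0 : Y ≠ 0 := norm_pos_iff.1 ht
  have hYe : Y = (WithLp.equiv 2 _).symm (A₀.mulVec x) := by
    rw [hY, hX]
    rfl
  have hyx : A₀.mulVec x ≠ 0 := by
    intro hh
    apply hY0
    rw [hYe, hh]
    rfl
  refine ⟨hyx, fun z₁ z₂ h1' h2' => ?_⟩
  have h1 : ‖z₁‖ < r := by exact h1'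
  have h2 : ‖z₂‖ < r := by exact h2'
  have keyeq : dotProduct (star (A₀.mulVec x)) ((z₁ ^ 2 • A₂ + z₂ • A₁ + A₀).mulVec x)
      = inner ℂ Y (Matrix.toEuclideanCLM (𝕜 := ℂ) (z₁ ^ 2 • A₂ + z₂ • A₁ + A₀) X) := by
    rw [hYe, hX]
    exact dotProduct_comm _ _
  rw [keyeq]
  have expand : (Matrix.toEuclideanCLM (𝕜 := ℂ) (z₁ ^ 2 • A₂ + z₂ • A₁ + A₀)) X
      = z₁ ^ 2 • (Matrix.toEuclideanCLM (𝕜 := ℂ) A₂ X)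
        + z₂ • (Matrix.toEuclideanCLM (𝕜 := ℂ) A₁ X) + Y := by
    simp [map_add, map_smul, hY]
  rw [expand]
  have hinner : (inner ℂ Y (z₁ ^ 2 • (Matrix.toEuclideanCLM (𝕜 := ℂ) A₂ X)
        + z₂ • (Matrix.toEuclideanCLM (𝕜 := ℂ) A₁ X) + Y) : ℂ)
      = z₁ ^ 2 * inner ℂ Y (Matrix.toEuclideanCLM (𝕜 := ℂ) A₂ X)
        + z₂ * inner ℂ Y (Matrix.toEuclideanCLM (𝕜 := ℂ) A₁ X) + (‖Y‖ : ℂ) ^ 2 := by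
    rw [inner_add_right, inner_add_right, inner_smul_right, inner_smul_right,
      inner_self_eq_norm_sq_to_K]
    norm_cast
  rw [hinner]
  intro hzero
  have e2 : ‖(inner ℂ Y (Matrix.toEuclideanCLM (𝕜 := ℂ) A₂ X) : ℂ)‖ ≤ ‖Y‖ * (opNorm A₂ * ‖X‖) := by
    refine le_trans (norm_inner_le_norm _ _) ?_
    exact mul_le_mul_of_nonneg_left ((Matrix.toEuclideanCLM (𝕜 := ℂ) A₂).le_opNorm X) (norm_nonneg _)
  have e1 : ‖(inner ℂ Y (Matrix.toEuclideanCLM (𝕜 := ℂ) A₁ X) : ℂ)‖ ≤ ‖Y‖ * (opNorm A₁ * ‖X‖) := by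
    refine le_trans (norm_inner_le_norm _ _) ?_
    exact mul_le_mul_of_nonneg_left ((Matrix.toEuclideanCLM (𝕜 := ℂ) A₁).le_opNorm X) (norm_nonneg _)
  have hsq : ((‖Y‖ : ℂ) ^ 2) = -(z₁ ^ 2 * inner ℂ Y (Matrix.toEuclideanCLM (𝕜 := ℂ) A₂ X)
        + z₂ * inner ℂ Y (Matrix.toEuclideanCLM (𝕜 := ℂ) A₁ X)) := by
    linear_combination hzero
  have ha1 : (0:ℝ) ≤ ‖z₁‖ := norm_nonneg _
  have ha2 : (0:ℝ) ≤ ‖z₂‖ := norm_nonneg _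
  have hnorm : ‖Y‖ ^ 2 ≤ ‖z₁‖ ^ 2 * (‖Y‖ * (opNorm A₂ * ‖X‖))
      + ‖z₂‖ * (‖Y‖ * (opNorm A₁ * ‖X‖)) := by
    have hcn := congrArg norm hsq
    rw [norm_neg] at hcn
    have h3 : ‖((‖Y‖ : ℂ) ^ 2)‖ = ‖Y‖ ^ 2 := by
      rw [norm_pow, Complex.norm_real, norm_norm]
    calc ‖Y‖ ^ 2 = ‖(z₁ ^ 2 * inner ℂ Y (Matrix.toEuclideanCLM (𝕜 := ℂ) A₂ X)
        + z₂ * inner ℂ Y (Matrix.toEuclideanCLM (𝕜 := ℂ) A₁ X) : ℂ)‖ := by rw [← hcn, h3]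
      _ ≤ ‖(z₁ ^ 2 * inner ℂ Y (Matrix.toEuclideanCLM (𝕜 := ℂ) A₂ X) : ℂ)‖
          + ‖(z₂ * inner ℂ Y (Matrix.toEuclideanCLM (𝕜 := ℂ) A₁ X) : ℂ)‖ := norm_add_le _ _
      _ ≤ ‖z₁‖ ^ 2 * (‖Y‖ * (opNorm A₂ * ‖X‖))
          + ‖z₂‖ * (‖Y‖ * (opNorm A₁ * ‖X‖)) := by
          rw [norm_mul, norm_mul, norm_pow]
          exact add_le_add (mul_le_mul_of_nonneg_left e2 (by positivity))
            (mul_le_mul_of_nonneg_left e1 ha2)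
  have hr2 : ‖z₁‖ ^ 2 ≤ r ^ 2 := by nlinarith
  have e3 : ‖z₁‖ ^ 2 * (‖Y‖ * (opNorm A₂ * ‖X‖)) ≤ r ^ 2 * (‖Y‖ * (opNorm A₂ * ‖X‖)) :=
    mul_le_mul_of_nonneg_right hr2 (by positivity)
  have e4 : ‖z₂‖ * (‖Y‖ * (opNorm A₁ * ‖X‖)) ≤ r * (‖Y‖ * (opNorm A₁ * ‖X‖)) :=
    mul_le_mul_of_nonneg_right h2.le (by positivity)
  have h5 : (r * opNorm A₁ + r ^ 2 * opNorm A₂) * ‖X‖ < ‖Y‖ := by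
    calc (r * opNorm A₁ + r ^ 2 * opNorm A₂) * ‖X‖ < sigmaMin A₀ * ‖X‖ := by
          exact mul_lt_mul_of_pos_right h hs
      _ ≤ ‖Y‖ := hσX
  linarith [mul_lt_mul_of_pos_left h5 ht]

theorem stmt16 {n : ℕ} (A₀ A₁ A₂ : Matrix (Fin n) (Fin n) ℂ) (r : ℝ) (hr : 0 < r)
    (h : r * opNorm A₁ + r ^ 2 * opNorm A₂ < sigmaMin A₀) :
    (∀ z₁ z₂ : ℂ, ‖z₁‖ < r → ‖z₂‖ < r → ∀ x : Fin n → ℂ, x ≠ 0 →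
      (z₁ ^ 2 • A₂ + z₂ • A₁ + A₀).mulVec x ≠ 0) ∧
    Hyperstable (fun μ => μ ^ 2 • A₂ + μ • A₁ + A₀) {z : ℂ | ‖z‖ < r} := by
  constructor
  · intro z₁ z₂ h1 h2 x hx hzero
    exact (key A₀ A₁ A₂ r hr h x hx).2 z₁ z₂ h1 h2 (by rw [hzero, dotProduct_zero])
  · intro x hx
    obtain ⟨hy0, hy⟩ := key A₀ A₁ A₂ r hr h x hx
    exact ⟨A₀.mulVec x, hy0, fun μ hμ => hy μ μ hμ hμ⟩
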